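/- For all I, J ∈ ℐ_λ, the Shapovalov pairing of the vectors ξ_I^+ and ξ_J^− satisfies 𝒮(ξ_I^+, ξ_J^−) = δ_{I,J} · R(z_I)/Q(z_I). -/

import Mathlib

open scoped BigOperators

noncomputable section

namespace GRTV

/-- The field `ℂ(z_1,…,z_n,h)` of rational functions. -/
abbrev K (n : ℕ) : Type := FractionRing (MvPolynomial (Fin n ⊕ Unit) ℂ)

/-- The variable `z_i`. -/
def z {n : ℕ} (i : Fin n) : K n :=
  algebraMap (MvPolynomial (Fin n ⊕ Unit) ℂ) (K n) (MvPolynomial.X (Sum.inl i))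

/-- The variable `h`. -/
def hvar {n : ℕ} : K n :=
  algebraMap (MvPolynomial (Fin n ⊕ Unit) ℂ) (K n) (MvPolynomial.X (Sum.inr ()))

/-- The field automorphism of `ℂ(z_1,…,z_n,h)` permuting the variables `z_i` by `σ`
(and fixing `h`); `f ↦ f^σ`. -/
def permK {n : ℕ} (σ : Equiv.Perm (Fin n)) : K n ≃+* K n :=
  IsFractionRing.ringEquivOfRingEquiv
    (MvPolynomial.renameEquiv ℂ (Equiv.sumCongr σ (Equiv.refl Unit))).toRingEquiv

/-- `V ⊗ ℂ(z_1,…,z_n,h)` in coordinates: a vector is the family of its coordinates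
in the basis `{v_I}`, where a basis index (a decomposition `I`) is recorded as the word
`m : Fin n → Fin N` with `I_j = m⁻¹(j)`. -/
abbrev VV (n N : ℕ) : Type := (Fin n → Fin N) → K n

/-- `h` for the `+` case (`ε = true`) and `-h` for the `−` case (`ε = false`). -/
def sign' {n : ℕ} (ε : Bool) : K n := if ε then hvar else -hvar

def fin1 {n : ℕ} (i : ℕ) (hi : i + 1 < n) : Fin n := ⟨i, Nat.lt_of_succ_lt hi⟩
def fin2 {n : ℕ} (i : ℕ) (hi : i + 1 < n) : Fin n := ⟨i + 1, hi⟩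

/-- The operator `ŝ̃_i^±`:
`ŝ̃_i^± f = ((z_i−z_{i+1})P^{(i,i+1)} ∓ h)/(z_i−z_{i+1} ∓ h) · f^{s_i}`. -/
def tOp {n N : ℕ} (ε : Bool) (i : ℕ) (hi : i + 1 < n) (f : VV n N) : VV n N :=
  fun m =>
    ((z (fin1 i hi) - z (fin2 i hi)) *
          permK (Equiv.swap (fin1 i hi) (fin2 i hi))
            (f (m ∘ ⇑(Equiv.swap (fin1 i hi) (fin2 i hi))))
        - sign' ε * permK (Equiv.swap (fin1 i hi) (fin2 i hi)) (f m))
      / (z (fin1 i hi) - z (fin2 i hi) - sign' ε)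

/-- The block `I_a = {k : m k = a}` of the decomposition encoded by the word `m`. -/
def fib {n N : ℕ} (m : Fin n → Fin N) (a : Fin N) : Finset (Fin n) :=
  Finset.univ.filter (fun k => m k = a)

/-- `I ∈ ℐ_λ`, i.e. `|I_a| = λ_a` for all `a`. -/
def memI {n N : ℕ} (lam : Fin N → ℕ) (m : Fin n → Fin N) : Prop :=
  ∀ a : Fin N, (fib m a).card = lam a

/-- The order on subsets of `{1,…,n}` of equal cardinality:
`A ≤ B` iff `a_j ≤ b_j` for all `j`, where `A = {a_1<⋯<a_m}`, `B = {b_1<⋯<b_m}`. -/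
def subLE {n : ℕ} (A B : Finset (Fin n)) : Prop :=
  ∃ h : A.card = B.card,
    ∀ j : Fin A.card, (↑(A.orderIsoOfFin rfl j) : Fin n) ≤ ↑(B.orderIsoOfFin h.symm j)

/-- The strict order `I < J` on decompositions: `I_k = J_k` for `k < l` and `I_l < J_l`. -/
def decLT {n N : ℕ} (mI mJ : Fin n → Fin N) : Prop :=
  ∃ l : Fin N, (∀ k : Fin N, k < l → fib mI k = fib mJ k) ∧
    subLE (fib mI l) (fib mJ l) ∧ fib mI l ≠ fib mJ l

/-- `I ≤ J` on decompositions. -/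
def decLE {n N : ℕ} (mI mJ : Fin n → Fin N) : Prop :=
  decLT mI mJ ∨ mI = mJ

/-- `Q(z_I) = ∏_{1≤a<b≤N} ∏_{i∈I_a} ∏_{j∈I_b} (z_i−z_j+h)`. -/
def Qz {n N : ℕ} (m : Fin n → Fin N) : K n :=
  ∏ p ∈ Finset.univ.filter (fun p : Fin n × Fin n => m p.1 < m p.2),
    (z p.1 - z p.2 + hvar)

/-- `R(z_I) = ∏_{1≤a<b≤N} ∏_{i∈I_a} ∏_{j∈I_b} (z_i−z_j)`. -/
def Rz {n N : ℕ} (m : Fin n → Fin N) : K n :=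
  ∏ p ∈ Finset.univ.filter (fun p : Fin n × Fin n => m p.1 < m p.2),
    (z p.1 - z p.2)

/-- The basis vector `v_I` corresponding to the word `m0`. -/
def bas {n N : ℕ} (m0 : Fin n → Fin N) : VV n N :=
  fun m => if m = m0 then 1 else 0

/-- `D = ∏_{1≤i<j≤n}(z_i−z_j+h)`. -/
def Dpoly (n : ℕ) : K n :=
  ∏ p ∈ Finset.univ.filter (fun p : Fin n × Fin n => p.1 < p.2), (z p.1 - z p.2 + hvar)

/-- `Ď = ∏_{1≤i<j≤n}(z_j−z_i+h)`. -/
def Dcheck (n : ℕ) : K n :=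
  ∏ p ∈ Finset.univ.filter (fun p : Fin n × Fin n => p.1 < p.2), (z p.2 - z p.1 + hvar)

set_option synthInstance.maxHeartbeats 1000000 in
lemma KmapSub {n : ℕ} (p q : MvPolynomial (Fin n ⊕ Unit) ℂ) :
    algebraMap _ (K n) p - algebraMap _ (K n) q = algebraMap _ (K n) (p - q) :=
  (map_sub _ p q).symm

set_option synthInstance.maxHeartbeats 1000000 in
lemma KmapAdd {n : ℕ} (p q : MvPolynomial (Fin n ⊕ Unit) ℂ) :
    algebraMap _ (K n) p + algebraMap _ (K n) q = algebraMap _ (K n) (p + q) :=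
  (map_add _ p q).symm

section Basic
variable {n N : ℕ}

lemma algMap_inj : Function.Injective
    (algebraMap (MvPolynomial (Fin n ⊕ Unit) ℂ) (K n)) :=
  IsFractionRing.injective _ _

lemma poly_ne_of_eval {p : MvPolynomial (Fin n ⊕ Unit) ℂ}
    (g : (Fin n ⊕ Unit) → ℂ) (h : MvPolynomial.eval g p ≠ 0) : p ≠ 0 := by
  intro hp; apply h; rw [hp]; simp

lemma z_sub_ne {i j : Fin n} (hij : i ≠ j) : z i - z j ≠ 0 := by
  rw [z, z, KmapSub, (map_ne_zero_iff _ algMap_inj)]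
  apply poly_ne_of_eval (fun v => if v = Sum.inl i then (1:ℂ) else 0)
  simp [Ne.symm hij, (fun h => hij (Sum.inl.inj h).symm : Sum.inl j ≠ Sum.inl i)]

lemma z_sub_add_h_ne {i j : Fin n} (hij : i ≠ j) : z i - z j + hvar ≠ 0 := by
  rw [z, z, hvar, KmapSub, KmapAdd, (map_ne_zero_iff _ algMap_inj)]
  apply poly_ne_of_eval (fun v => if v = Sum.inl i then (1:ℂ) else 0)
  have h1 : (Sum.inl j : Fin n ⊕ Unit) ≠ Sum.inl i := fun h => hij (Sum.inl.inj h).symm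
  simp [h1]

lemma z_sub_sub_h_ne {i j : Fin n} (hij : i ≠ j) : z i - z j - hvar ≠ 0 := by
  rw [z, z, hvar, KmapSub, KmapSub, (map_ne_zero_iff _ algMap_inj)]
  apply poly_ne_of_eval (fun v => if v = Sum.inl i then (1:ℂ) else 0)
  have h1 : (Sum.inl j : Fin n ⊕ Unit) ≠ Sum.inl i := fun h => hij (Sum.inl.inj h).symm
  simp [h1]

lemma permK_algebraMap (σ : Equiv.Perm (Fin n)) (p : MvPolynomial (Fin n ⊕ Unit) ℂ) :
    permK σ (algebraMap _ (K n) p) =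
      algebraMap _ (K n) (MvPolynomial.rename (Equiv.sumCongr σ (Equiv.refl Unit)) p) := by
  exact IsFractionRing.ringEquivOfRingEquiv_algebraMap _ p

lemma permK_z (σ : Equiv.Perm (Fin n)) (i : Fin n) : permK σ (z i) = z (σ i) := by
  rw [z, permK_algebraMap]; simp [z]

lemma permK_hvar (σ : Equiv.Perm (Fin n)) : permK (n := n) σ hvar = hvar := by
  rw [hvar, permK_algebraMap]; simp [hvar]

lemma permK_permK_swap (a b : Fin n) (x : K n) :
    permK (Equiv.swap a b) (permK (Equiv.swap a b) x) = x := by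
  have key : ((permK (n := n) (Equiv.swap a b)).toRingHom.comp
      (permK (Equiv.swap a b)).toRingHom) = RingHom.id (K n) := by
    apply IsLocalization.ringHom_ext (nonZeroDivisors (MvPolynomial (Fin n ⊕ Unit) ℂ))
    refine RingHom.ext fun p => ?_
    simp only [RingHom.coe_comp, Function.comp_apply, RingEquiv.toRingHom_eq_coe,
      RingHom.coe_coe, RingHom.id_apply]
    rw [permK_algebraMap, permK_algebraMap, MvPolynomial.rename_rename]
    have h2 : (⇑(Equiv.sumCongr (Equiv.swap a b) (Equiv.refl Unit)) ∘
        ⇑(Equiv.sumCongr (Equiv.swap a b) (Equiv.refl Unit))) = id := by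
      funext v; cases v <;> simp [Equiv.swap_apply_self]
    rw [h2, MvPolynomial.rename_id]; rfl
  exact RingHom.congr_fun key x

end Basic
section Pairing
variable {n N : ℕ}

lemma comp_swap_swap (a b : Fin n) (m : Fin n → Fin N) :
    (m ∘ ⇑(Equiv.swap a b)) ∘ ⇑(Equiv.swap a b) = m := by
  funext x; simp [Equiv.swap_apply_self]

lemma sum_comp_swap (a b : Fin n) (F : (Fin n → Fin N) → K n) :
    ∑ k : Fin n → Fin N, F (k ∘ ⇑(Equiv.swap a b)) = ∑ k : Fin n → Fin N, F k := by
  apply Fintype.sum_bijective (fun k : Fin n → Fin N => k ∘ ⇑(Equiv.swap a b))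
    (Function.Involutive.bijective (fun k => comp_swap_swap a b k)) _ _ (fun k => rfl)

lemma pair_tOp (i : ℕ) (hi : i + 1 < n) (f g : VV n N) :
    ∑ k : Fin n → Fin N, tOp true i hi f k * tOp false i hi g k
      = permK (Equiv.swap (fin1 i hi) (fin2 i hi)) (∑ k : Fin n → Fin N, f k * g k) := by
  set a := fin1 i hi
  set b := fin2 i hi
  set s := Equiv.swap a b
  set σ := permK (n := n) s
  have hane : a ≠ b := by
    simp only [a, b, fin1, fin2, Fin.ne_iff_vne]; omega
  have hd1 : z a - z b - hvar ≠ 0 := z_sub_sub_h_ne hane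
  have hd2 : z a - z b + hvar ≠ 0 := z_sub_add_h_ne hane
  set A := z a - z b with hA
  set h := (hvar : K n)
  set T := σ (∑ k : Fin n → Fin N, f k * g k) with hT
  have hTT : T = ∑ k : Fin n → Fin N, σ (f k) * σ (g k) := by
    rw [hT, map_sum]
    exact Finset.sum_congr rfl (fun k _ => map_mul σ _ _)
  have step1 : ∀ k : Fin n → Fin N,
      tOp true i hi f k * tOp false i hi g k
      = ((A * σ (f (k ∘ ⇑s)) - h * σ (f k)) * (A * σ (g (k ∘ ⇑s)) + h * σ (g k)))
        / ((A - h) * (A + h)) := by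
    intro k
    simp only [tOp, sign', if_true, Bool.false_eq_true, if_false]
    rw [div_mul_div_comm]
    congr 1 <;> ring
  rw [Finset.sum_congr rfl (fun k _ => step1 k), ← Finset.sum_div]
  have expand : ∀ k : Fin n → Fin N,
      (A * σ (f (k ∘ ⇑s)) - h * σ (f k)) * (A * σ (g (k ∘ ⇑s)) + h * σ (g k))
      = A * A * (σ (f (k ∘ ⇑s)) * σ (g (k ∘ ⇑s))) - h * h * (σ (f k) * σ (g k))
        + (A * h * (σ (f (k ∘ ⇑s)) * σ (g k)) - A * h * (σ (f k) * σ (g (k ∘ ⇑s)))) := by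
    intro k; ring
  rw [Finset.sum_congr rfl (fun k _ => expand k)]
  rw [Finset.sum_add_distrib, Finset.sum_sub_distrib, Finset.sum_sub_distrib,
    ← Finset.mul_sum, ← Finset.mul_sum, ← Finset.mul_sum, ← Finset.mul_sum]
  have r1 : ∑ k : Fin n → Fin N, σ (f (k ∘ ⇑s)) * σ (g (k ∘ ⇑s))
      = ∑ k : Fin n → Fin N, σ (f k) * σ (g k) :=
    sum_comp_swap a b (fun k => σ (f k) * σ (g k))
  have r2 : ∑ k : Fin n → Fin N, σ (f (k ∘ ⇑s)) * σ (g k)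
      = ∑ k : Fin n → Fin N, σ (f k) * σ (g (k ∘ ⇑s)) := by
    rw [← sum_comp_swap a b (fun k => σ (f k) * σ (g (k ∘ ⇑s)))]
    exact Finset.sum_congr rfl (fun k _ => by rw [comp_swap_swap])
  rw [r1, r2, ← hTT]
  rw [sub_self, add_zero]
  have : A * A * T - h * h * T = ((A - h) * (A + h)) * T := by ring
  rw [this, mul_comm ((A - h) * (A + h)) T, mul_div_assoc, div_self (mul_ne_zero hd1 hd2), mul_one]

end Pairing
section Cnt
variable {n N : ℕ}

/-- Number of positions `t < k` with `m t ≤ α`. -/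
def cnt (m : Fin n → Fin N) (α : Fin N) (k : ℕ) : ℕ :=
  ∑ t : Fin n, if t.val < k ∧ m t ≤ α then 1 else 0

/-- The partial order on words: `J ⊴ K`. -/
def ord (J Kw : Fin n → Fin N) : Prop :=
  ∀ (α : Fin N) (k : ℕ), cnt Kw α k ≤ cnt J α k

lemma ord_refl (J : Fin n → Fin N) : ord J J := fun _ _ => le_refl _

lemma ord_trans {J L M : Fin n → Fin N} (h1 : ord J L) (h2 : ord L M) : ord J M :=
  fun α k => le_trans (h2 α k) (h1 α k)

lemma cnt_succ (m : Fin n → Fin N) (α : Fin N) (t : Fin n) :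
    cnt m α (t.val + 1) = cnt m α t.val + (if m t ≤ α then 1 else 0) := by
  unfold cnt
  have key : ∀ x : Fin n, (if x.val < t.val + 1 ∧ m x ≤ α then (1:ℕ) else 0)
      = (if x.val < t.val ∧ m x ≤ α then 1 else 0)
        + (if x = t ∧ m x ≤ α then 1 else 0) := by
    intro x
    by_cases h1 : x.val < t.val
    · have hxt : x ≠ t := fun he => by rw [he] at h1; omega
      have h1' : x.val < t.val + 1 := by omega
      by_cases h2 : m x ≤ α <;> simp [h1, h2, hxt, h1']
    · by_cases h3 : x = t
      · subst h3
        by_cases h2 : m x ≤ α <;> simp [h1, h2]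
      · have h4 : ¬ x.val < t.val + 1 := by
          have := Fin.val_ne_of_ne h3; omega
        simp [h1, h3, h4]
  rw [Finset.sum_congr rfl (fun x _ => key x), Finset.sum_add_distrib]
  congr 1
  by_cases h : m t ≤ α
  · have e1 : ∀ x : Fin n, (if x = t ∧ m x ≤ α then (1:ℕ) else 0)
        = if x = t then 1 else 0 := by
      intro x
      by_cases hx : x = t
      · subst hx; simp [h]
      · simp [hx]
    rw [Finset.sum_congr rfl (fun x _ => e1 x)]
    simp [Finset.sum_ite_eq' Finset.univ t (fun _ => (1:ℕ)), h]
  · have e1 : ∀ x : Fin n, (if x = t ∧ m x ≤ α then (1:ℕ) else 0) = 0 := by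
      intro x
      by_cases hx : x = t
      · subst hx; simp [h]
      · simp [hx]
    rw [Finset.sum_congr rfl (fun x _ => e1 x)]
    simp [h]

variable {i : ℕ}

lemma fin1_ne_fin2 (hi : i + 1 < n) : fin1 i hi ≠ fin2 i hi := by
  simp only [fin1, fin2, Fin.ne_iff_vne]; omega

lemma cnt_comp_swap_le (hi : i + 1 < n) (m : Fin n → Fin N) (α : Fin N) (k : ℕ)
    (hk : k ≤ i) : cnt (m ∘ ⇑(Equiv.swap (fin1 i hi) (fin2 i hi))) α k = cnt m α k := by
  unfold cnt
  apply Finset.sum_congr rfl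
  intro x _
  by_cases h1 : x.val < k
  · have hxa : x ≠ fin1 i hi := by
      intro he; rw [he] at h1; simp only [fin1] at h1; omega
    have hxb : x ≠ fin2 i hi := by
      intro he; rw [he] at h1; simp only [fin2] at h1; omega
    simp [Function.comp, Equiv.swap_apply_of_ne_of_ne hxa hxb]
  · simp [h1]

lemma cnt_comp_swap_ge (hi : i + 1 < n) (m : Fin n → Fin N) (α : Fin N) (k : ℕ)
    (hk : i + 2 ≤ k) : cnt (m ∘ ⇑(Equiv.swap (fin1 i hi) (fin2 i hi))) α k = cnt m α k := by
  set s := Equiv.swap (fin1 i hi) (fin2 i hi)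
  unfold cnt
  have key : ∀ x : Fin n, (if x.val < k ∧ (m ∘ ⇑s) x ≤ α then (1:ℕ) else 0)
      = (fun t : Fin n => if t.val < k ∧ m t ≤ α then (1:ℕ) else 0) (s x) := by
    intro x
    have hsx : (s x).val < k ↔ x.val < k := by
      rcases eq_or_ne x (fin1 i hi) with h | h
      · subst h; rw [Equiv.swap_apply_left]; simp only [fin1, fin2]; omega
      rcases eq_or_ne x (fin2 i hi) with h2 | h2
      · subst h2; rw [Equiv.swap_apply_right]; simp only [fin1, fin2]; omega
      · rw [Equiv.swap_apply_of_ne_of_ne h h2]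
    simp only [Function.comp]
    by_cases hc : m (s x) ≤ α
    · by_cases hx : x.val < k <;> simp [hc, hx, hsx]
    · simp [hc]
  rw [Finset.sum_congr rfl (fun x _ => key x)]
  exact Equiv.sum_comp s (fun t : Fin n => if t.val < k ∧ m t ≤ α then (1:ℕ) else 0)

lemma cnt_at_fin1 (hi : i + 1 < n) (m : Fin n → Fin N) (α : Fin N) :
    cnt m α (i + 1) = cnt m α i + (if m (fin1 i hi) ≤ α then 1 else 0) :=
  cnt_succ m α (fin1 i hi)

lemma cnt_at_fin2 (hi : i + 1 < n) (m : Fin n → Fin N) (α : Fin N) :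
    cnt m α (i + 2) = cnt m α (i + 1) + (if m (fin2 i hi) ≤ α then 1 else 0) :=
  cnt_succ m α (fin2 i hi)

lemma comp_swap_at_fin1 (hi : i + 1 < n) (m : Fin n → Fin N) :
    (m ∘ ⇑(Equiv.swap (fin1 i hi) (fin2 i hi))) (fin1 i hi) = m (fin2 i hi) := by
  simp [Equiv.swap_apply_left]

lemma comp_swap_at_fin2 (hi : i + 1 < n) (m : Fin n → Fin N) :
    (m ∘ ⇑(Equiv.swap (fin1 i hi) (fin2 i hi))) (fin2 i hi) = m (fin1 i hi) := by
  simp [Equiv.swap_apply_right]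

lemma ord_comp_swap_of_ascent (hi : i + 1 < n) (J : Fin n → Fin N)
    (hasc : J (fin1 i hi) < J (fin2 i hi)) :
    ord J (J ∘ ⇑(Equiv.swap (fin1 i hi) (fin2 i hi))) := by
  intro α k
  rcases (by omega : k ≤ i ∨ k = i + 1 ∨ i + 2 ≤ k) with hk | hk | hk
  · rw [cnt_comp_swap_le hi _ _ _ hk]
  · subst hk
    rw [cnt_at_fin1 hi, cnt_at_fin1 hi, cnt_comp_swap_le hi _ _ _ (le_refl i),
      comp_swap_at_fin1 hi]
    have : (if J (fin2 i hi) ≤ α then (1:ℕ) else 0) ≤ if J (fin1 i hi) ≤ α then 1 else 0 := by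
      by_cases hb : J (fin2 i hi) ≤ α
      · have ha : J (fin1 i hi) ≤ α := le_trans (le_of_lt hasc) hb
        simp [ha, hb]
      · simp [hb]
    omega
  · rw [cnt_comp_swap_ge hi _ _ _ hk]

lemma not_ord_comp_swap_of_descent (hi : i + 1 < n) (J : Fin n → Fin N)
    (hdes : J (fin2 i hi) < J (fin1 i hi)) :
    ¬ ord J (J ∘ ⇑(Equiv.swap (fin1 i hi) (fin2 i hi))) := by
  intro hord
  have := hord (J (fin2 i hi)) (i + 1)
  rw [cnt_at_fin1 hi, cnt_at_fin1 hi, cnt_comp_swap_le hi _ _ _ (le_refl i),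
    comp_swap_at_fin1 hi] at this
  simp [le_refl, not_le.mpr hdes] at this

lemma ord_exchange (hi : i + 1 < n) (X Kw : Fin n → Fin N)
    (hasc : X (fin1 i hi) < X (fin2 i hi))
    (h : ord (X ∘ ⇑(Equiv.swap (fin1 i hi) (fin2 i hi)))
      (Kw ∘ ⇑(Equiv.swap (fin1 i hi) (fin2 i hi)))) : ord X Kw := by
  intro α k
  rcases (by omega : k ≤ i ∨ k = i + 1 ∨ i + 2 ≤ k) with hk | hk | hk
  · have := h α k
    rwa [cnt_comp_swap_le hi _ _ _ hk, cnt_comp_swap_le hi _ _ _ hk] at this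
  · subst hk
    have h0 : cnt Kw α i ≤ cnt X α i := by
      have := h α i
      rwa [cnt_comp_swap_le hi _ _ _ (le_refl i),
        cnt_comp_swap_le hi _ _ _ (le_refl i)] at this
    have h2 : cnt Kw α (i + 2) ≤ cnt X α (i + 2) := by
      have := h α (i + 2)
      rwa [cnt_comp_swap_ge hi _ _ _ (by omega), cnt_comp_swap_ge hi _ _ _ (by omega)] at this
    rw [cnt_at_fin2 hi, cnt_at_fin2 hi, cnt_at_fin1 hi, cnt_at_fin1 hi] at h2
    rw [cnt_at_fin1 hi, cnt_at_fin1 hi]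
    by_cases hXa : X (fin1 i hi) ≤ α
    · have : (if Kw (fin1 i hi) ≤ α then (1:ℕ) else 0) ≤ 1 := by
        by_cases hk1 : Kw (fin1 i hi) ≤ α <;> simp [hk1]
      simp only [hXa, if_true]
      omega
    · have hXb : ¬ X (fin2 i hi) ≤ α := fun hb => hXa (le_trans (le_of_lt hasc) hb)
      simp only [hXa, hXb, if_false, add_zero] at h2 ⊢
      omega
  · have := h α k
    rwa [cnt_comp_swap_ge hi _ _ _ hk, cnt_comp_swap_ge hi _ _ _ hk] at this

end Cnt
section Uniq
variable {n N : ℕ}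

lemma cnt_card (m : Fin n → Fin N) (α : Fin N) (k : ℕ) :
    cnt m α k = (Finset.univ.filter (fun t : Fin n => t.val < k ∧ m t ≤ α)).card :=
  (Finset.card_filter _ _).symm

lemma FC {lam : Fin N → ℕ} {m : Fin n → Fin N} (hm : memI lam m) (α : Fin N) :
    (Finset.univ.filter (fun t : Fin n => m t ≤ α)).card
      = ∑ β ∈ Finset.univ.filter (· ≤ α), lam β := by
  rw [Finset.card_eq_sum_card_fiberwise
    (f := m) (t := Finset.univ.filter (· ≤ α))
    (fun x hx => by simpa using (Finset.mem_filter.mp hx).2)]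
  apply Finset.sum_congr rfl
  intro β hβ
  have hβα : β ≤ α := by simpa using hβ
  have : (Finset.univ.filter (fun t : Fin n => m t ≤ α)).filter (fun t => m t = β)
      = fib m β := by
    ext t
    simp only [Finset.mem_filter, Finset.mem_univ, true_and, fib]
    constructor
    · rintro ⟨_, h2⟩; exact h2
    · intro h; exact ⟨h ▸ hβα, h⟩
  rw [this, hm β]

lemma lowerset_mem_iff {S : Finset (Fin n)}
    (hS : ∀ x ∈ S, ∀ y : Fin n, y ≤ x → y ∈ S) (t : Fin n) :
    t ∈ S ↔ t.val < S.card := by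
  constructor
  · intro ht
    have hsub : Finset.Iic t ⊆ S := fun y hy => hS t ht y (Finset.mem_Iic.mp hy)
    have := Finset.card_le_card hsub
    rw [Fin.card_Iic] at this; omega
  · intro ht
    by_contra hns
    have hsub : S ⊆ Finset.Iio t := by
      intro y hy
      rcases lt_or_ge y t with h | h
      · exact Finset.mem_Iio.mpr h
      · exact absurd (hS y hy t h) hns
    have := Finset.card_le_card hsub
    rw [Fin.card_Iio] at this; omega

lemma upperset_mem_iff {S : Finset (Fin n)}
    (hS : ∀ x ∈ S, ∀ y : Fin n, x ≤ y → y ∈ S) (t : Fin n) :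
    t ∈ S ↔ n ≤ S.card + t.val := by
  constructor
  · intro ht
    have hsub : Finset.Ici t ⊆ S := fun y hy => hS t ht y (Finset.mem_Ici.mp hy)
    have := Finset.card_le_card hsub
    rw [Fin.card_Ici] at this; omega
  · intro ht
    by_contra hns
    have hsub : S ⊆ Finset.Ioi t := by
      intro y hy
      rcases lt_or_ge t y with h | h
      · exact Finset.mem_Ioi.mpr h
      · exact absurd (hS y hy t h) hns
    have := Finset.card_le_card hsub
    rw [Fin.card_Ioi] at this
    have : t.val < n := t.isLt
    omega

lemma antitone_unique {lam : Fin N → ℕ} {J L : Fin n → Fin N}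
    (hJm : memI lam J) (hLm : memI lam L) (hJ : Antitone J) (hL : Antitone L) : J = L := by
  funext t
  have key : ∀ α, (J t ≤ α ↔ L t ≤ α) := by
    intro α
    have hupJ : ∀ x ∈ Finset.univ.filter (fun t : Fin n => J t ≤ α),
        ∀ y : Fin n, x ≤ y → y ∈ Finset.univ.filter (fun t : Fin n => J t ≤ α) := by
      intro x hx y hxy
      simp only [Finset.mem_filter, Finset.mem_univ, true_and] at hx ⊢
      exact le_trans (hJ hxy) hx
    have hupL : ∀ x ∈ Finset.univ.filter (fun t : Fin n => L t ≤ α),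
        ∀ y : Fin n, x ≤ y → y ∈ Finset.univ.filter (fun t : Fin n => L t ≤ α) := by
      intro x hx y hxy
      simp only [Finset.mem_filter, Finset.mem_univ, true_and] at hx ⊢
      exact le_trans (hL hxy) hx
    have hcard : (Finset.univ.filter (fun t : Fin n => J t ≤ α)).card
        = (Finset.univ.filter (fun t : Fin n => L t ≤ α)).card := by
      rw [FC hJm, FC hLm]
    constructor
    · intro h
      have : t ∈ Finset.univ.filter (fun t : Fin n => J t ≤ α) := by simp [h]
      rw [upperset_mem_iff hupJ, hcard, ← upperset_mem_iff hupL] at this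
      simpa using this
    · intro h
      have : t ∈ Finset.univ.filter (fun t : Fin n => L t ≤ α) := by simp [h]
      rw [upperset_mem_iff hupL, ← hcard, ← upperset_mem_iff hupJ] at this
      simpa using this
  exact le_antisymm ((key (L t)).mpr (le_refl _)) ((key (J t)).mp (le_refl _))

lemma card_filter_val_lt (c : ℕ) :
    (Finset.univ.filter (fun t : Fin n => t.val < c)).card = min c n := by
  rw [← Finset.card_range (min c n)]
  refine Finset.card_bij' (fun (t : Fin n) _ => t.val)
    (fun (x : ℕ) hx => (⟨x, by simp only [Finset.mem_range] at hx; omega⟩ : Fin n))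
    ?_ ?_ ?_ ?_
  · intro a ha
    simp only [Finset.mem_filter, Finset.mem_univ, true_and] at ha
    simp only [Finset.mem_range]
    have := a.isLt; omega
  · intro x hx
    simp only [Finset.mem_range] at hx
    simp only [Finset.mem_filter, Finset.mem_univ, true_and]
    omega
  · intro a ha; rfl
  · intro x hx; rfl

lemma cnt_of_monotone {lam : Fin N → ℕ} {m0 : Fin n → Fin N}
    (hm : memI lam m0) (hmono : Monotone m0) (α : Fin N) (k : ℕ) :
    cnt m0 α k = min k (∑ β ∈ Finset.univ.filter (· ≤ α), lam β) := by
  set c := ∑ β ∈ Finset.univ.filter (· ≤ α), lam β with hc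
  have hlowmem : ∀ t : Fin n, m0 t ≤ α ↔ t.val < c := by
    intro t
    have hlow : ∀ x ∈ Finset.univ.filter (fun t : Fin n => m0 t ≤ α),
        ∀ y : Fin n, y ≤ x → y ∈ Finset.univ.filter (fun t : Fin n => m0 t ≤ α) := by
      intro x hx y hxy
      simp only [Finset.mem_filter, Finset.mem_univ, true_and] at hx ⊢
      exact le_trans (hmono hxy) hx
    have := lowerset_mem_iff hlow t
    rw [FC hm] at this
    simpa using this
  have hcn : c ≤ n := by
    rw [hc, ← FC hm]
    exact le_trans (Finset.card_le_univ _) (by simp)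
  rw [cnt_card]
  have : Finset.univ.filter (fun t : Fin n => t.val < k ∧ m0 t ≤ α)
      = Finset.univ.filter (fun t : Fin n => t.val < min k c) := by
    apply Finset.filter_congr
    intro t _
    rw [hlowmem t]
    constructor
    · intro ⟨h1, h2⟩; omega
    · intro h; omega
  rw [this, card_filter_val_lt]
  omega

lemma cnt_le_k (m : Fin n → Fin N) (α : Fin N) (k : ℕ) : cnt m α k ≤ k := by
  rw [cnt_card]
  have hsub : Finset.univ.filter (fun t : Fin n => t.val < k ∧ m t ≤ α)
      ⊆ Finset.univ.filter (fun t : Fin n => t.val < k) :=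
    Finset.monotone_filter_right _ (fun t _ ht => ht.1)
  have := Finset.card_le_card hsub
  rw [card_filter_val_lt] at this
  omega

lemma cnt_le_total {lam : Fin N → ℕ} {m : Fin n → Fin N} (hm : memI lam m)
    (α : Fin N) (k : ℕ) :
    cnt m α k ≤ ∑ β ∈ Finset.univ.filter (· ≤ α), lam β := by
  rw [cnt_card, ← FC hm]
  exact Finset.card_le_card (Finset.monotone_filter_right _ (fun t _ ht => ht.2))

lemma cnt_ext {J L : Fin n → Fin N} (h : ∀ (α : Fin N) (k : ℕ), cnt J α k = cnt L α k) :
    J = L := by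
  funext t
  have key : ∀ α, (J t ≤ α ↔ L t ≤ α) := by
    intro α
    have h1 := cnt_succ J α t
    have h2 := cnt_succ L α t
    rw [h α (t.val + 1), h α t.val] at h1
    by_cases hJ : J t ≤ α <;> by_cases hL : L t ≤ α <;>
      simp [hJ, hL] at h1 h2 ⊢ <;> omega
  exact le_antisymm ((key (L t)).mpr (le_refl _)) ((key (J t)).mp (le_refl _))

lemma ord_min {lam : Fin N → ℕ} {m0 J : Fin n → Fin N}
    (hm0 : memI lam m0) (hm0mono : Monotone m0) (hJ : memI lam J)
    (hord : ord J m0) : J = m0 := by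
  apply cnt_ext
  intro α k
  have h0 := cnt_of_monotone hm0 hm0mono α k
  have hle : cnt J α k ≤ min k (∑ β ∈ Finset.univ.filter (· ≤ α), lam β) :=
    le_min (cnt_le_k J α k) (cnt_le_total hJ α k)
  have := hord α k
  omega

lemma monotone_of_no_desc (J : Fin n → Fin N)
    (h : ∀ (i : ℕ) (hi : i + 1 < n), J (fin1 i hi) ≤ J (fin2 i hi)) : Monotone J := by
  have key : ∀ (d : ℕ) (x : Fin n) (hd : x.val + d < n), J x ≤ J ⟨x.val + d, hd⟩ := by
    intro d
    induction d with
    | zero => intro x hd; exact le_of_eq (congrArg J (Fin.ext (by simp)))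
    | succ d ih =>
      intro x hd
      have h1 : x.val + d < n := by omega
      refine le_trans (ih x h1) ?_
      have := h (x.val + d) hd
      simpa [fin1, fin2, Nat.add_assoc] using this
  intro x y hxy
  have hxy' : x.val ≤ y.val := hxy
  have hd : x.val + (y.val - x.val) < n := by have := y.isLt; omega
  have : y = ⟨x.val + (y.val - x.val), hd⟩ := Fin.ext (by simp; omega)
  rw [this]
  exact key _ x hd

lemma antitone_of_no_asc (J : Fin n → Fin N)
    (h : ∀ (i : ℕ) (hi : i + 1 < n), J (fin2 i hi) ≤ J (fin1 i hi)) : Antitone J := by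
  have key : ∀ (d : ℕ) (x : Fin n) (hd : x.val + d < n), J ⟨x.val + d, hd⟩ ≤ J x := by
    intro d
    induction d with
    | zero => intro x hd; exact le_of_eq (congrArg J (Fin.ext (by simp)))
    | succ d ih =>
      intro x hd
      have h1 : x.val + d < n := by omega
      refine le_trans ?_ (ih x h1)
      have := h (x.val + d) hd
      simpa [fin1, fin2, Nat.add_assoc] using this
  intro x y hxy
  have hxy' : x.val ≤ y.val := hxy
  have hd : x.val + (y.val - x.val) < n := by have := y.isLt; omega
  have : y = ⟨x.val + (y.val - x.val), hd⟩ := Fin.ext (by simp; omega)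
  rw [this]
  exact key _ x hd

lemma monotone_unique {lam : Fin N → ℕ} {J L : Fin n → Fin N}
    (hJm : memI lam J) (hLm : memI lam L) (hJ : Monotone J) (hL : Monotone L) : J = L := by
  apply cnt_ext
  intro α k
  rw [cnt_of_monotone hJm hJ, cnt_of_monotone hLm hL]

end Uniq
section Asc
variable {n N : ℕ}

/-- Pairs of positions `p.1 < p.2` whose values are in relation `r`. -/
def AscS (r : Fin N → Fin N → Prop) [DecidableRel r] (m : Fin n → Fin N) :
    Finset (Fin n × Fin n) :=
  Finset.univ.filter (fun p => p.1 < p.2 ∧ r (m p.1) (m p.2))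

lemma swap_val {i : ℕ} (hi : i + 1 < n) (x : Fin n) :
    (Equiv.swap (fin1 i hi) (fin2 i hi) x).val
      = if x.val = i then i + 1 else if x.val = i + 1 then i else x.val := by
  by_cases hxa : x = fin1 i hi
  · rw [hxa, Equiv.swap_apply_left]
    simp only [fin1, fin2]
    split_ifs <;> omega
  · by_cases hxb : x = fin2 i hi
    · rw [hxb, Equiv.swap_apply_right]
      simp only [fin1, fin2]
      split_ifs <;> omega
    · rw [Equiv.swap_apply_of_ne_of_ne hxa hxb]
      have h1 : x.val ≠ i := fun h => hxa (Fin.ext h)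
      have h2 : x.val ≠ i + 1 := fun h => hxb (Fin.ext h)
      split_ifs <;> omega

lemma swap_lt {i : ℕ} (hi : i + 1 < n) {q1 q2 : Fin n} (h12 : q1 < q2)
    (hne : (q1, q2) ≠ (fin1 i hi, fin2 i hi)) :
    Equiv.swap (fin1 i hi) (fin2 i hi) q1 < Equiv.swap (fin1 i hi) (fin2 i hi) q2 := by
  have h12' : q1.val < q2.val := h12
  have hne' : ¬ (q1.val = i ∧ q2.val = i + 1) := by
    rintro ⟨e1, e2⟩
    exact hne (Prod.ext (Fin.ext e1) (Fin.ext e2))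
  rw [Fin.lt_def, swap_val hi, swap_val hi]
  split_ifs <;> omega

lemma AscS_swap_mem (r : Fin N → Fin N → Prop) [DecidableRel r]
    (hasymm : ∀ x y, r x y → ¬ r y x) {i : ℕ} (hi : i + 1 < n) (J : Fin n → Fin N)
    (hr : r (J (fin1 i hi)) (J (fin2 i hi))) (q : Fin n × Fin n) :
    q ∈ AscS r (J ∘ ⇑(Equiv.swap (fin1 i hi) (fin2 i hi)))
      ↔ ((Equiv.swap (fin1 i hi) (fin2 i hi) q.1,
          Equiv.swap (fin1 i hi) (fin2 i hi) q.2)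
            ∈ (AscS r J).erase (fin1 i hi, fin2 i hi)) := by
  have hab : fin1 i hi < fin2 i hi := Fin.lt_def.mpr (by simp [fin1, fin2])
  simp only [AscS, Finset.mem_erase, Finset.mem_filter, Finset.mem_univ, true_and,
    Function.comp]
  constructor
  · rintro ⟨h12, hrq⟩
    have hne : (q.1, q.2) ≠ (fin1 i hi, fin2 i hi) := by
      intro h
      have h1 : q.1 = fin1 i hi := congrArg Prod.fst h
      have h2 : q.2 = fin2 i hi := congrArg Prod.snd h
      rw [h1, h2, Equiv.swap_apply_left, Equiv.swap_apply_right] at hrq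
      exact hasymm _ _ hr hrq
    have hlt := swap_lt hi h12 hne
    refine ⟨?_, hlt, hrq⟩
    intro h
    have h1 : q.1 = fin2 i hi := by
      have := congrArg (⇑(Equiv.swap (fin1 i hi) (fin2 i hi))) (congrArg Prod.fst h)
      simpa [Equiv.swap_apply_self, Equiv.swap_apply_left] using this
    have h2 : q.2 = fin1 i hi := by
      have := congrArg (⇑(Equiv.swap (fin1 i hi) (fin2 i hi))) (congrArg Prod.snd h)
      simpa [Equiv.swap_apply_self, Equiv.swap_apply_right] using this
    rw [h1, h2] at h12
    exact absurd h12 (not_lt.mpr (le_of_lt hab))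
  · rintro ⟨hne, hlt, hrq⟩
    refine ⟨?_, hrq⟩
    have := swap_lt hi hlt hne
    simpa [Equiv.swap_apply_self] using this

lemma AscS_mem_adj (r : Fin N → Fin N → Prop) [DecidableRel r] {i : ℕ} (hi : i + 1 < n)
    (J : Fin n → Fin N) (hr : r (J (fin1 i hi)) (J (fin2 i hi))) :
    (fin1 i hi, fin2 i hi) ∈ AscS r J := by
  simp only [AscS, Finset.mem_filter, Finset.mem_univ, true_and]
  exact ⟨Fin.lt_def.mpr (by simp [fin1, fin2]), hr⟩

lemma AscS_swap_card (r : Fin N → Fin N → Prop) [DecidableRel r]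
    (hasymm : ∀ x y, r x y → ¬ r y x) {i : ℕ} (hi : i + 1 < n) (J : Fin n → Fin N)
    (hr : r (J (fin1 i hi)) (J (fin2 i hi))) :
    (AscS r J).card
      = (AscS r (J ∘ ⇑(Equiv.swap (fin1 i hi) (fin2 i hi)))).card + 1 := by
  have hcard : (AscS r (J ∘ ⇑(Equiv.swap (fin1 i hi) (fin2 i hi)))).card
      = ((AscS r J).erase (fin1 i hi, fin2 i hi)).card := by
    refine Finset.card_bij'
      (fun q _ => (Equiv.swap (fin1 i hi) (fin2 i hi) q.1,
        Equiv.swap (fin1 i hi) (fin2 i hi) q.2))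
      (fun q _ => (Equiv.swap (fin1 i hi) (fin2 i hi) q.1,
        Equiv.swap (fin1 i hi) (fin2 i hi) q.2)) ?_ ?_ ?_ ?_
    · intro q hq; exact (AscS_swap_mem r hasymm hi J hr q).mp hq
    · intro q hq
      apply (AscS_swap_mem r hasymm hi J hr _).mpr
      simpa [Equiv.swap_apply_self] using hq
    · intro q hq; simp [Equiv.swap_apply_self]
    · intro q hq; simp [Equiv.swap_apply_self]
  rw [hcard, Finset.card_erase_of_mem (AscS_mem_adj r hi J hr)]
  have : (AscS r J).card ≠ 0 := by
    intro h
    have he := Finset.card_eq_zero.mp h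
    have hmem := AscS_mem_adj r hi J hr
    rw [he] at hmem
    exact absurd hmem (Finset.notMem_empty _)
  omega

lemma AscS_swap_prod (r : Fin N → Fin N → Prop) [DecidableRel r]
    (hasymm : ∀ x y, r x y → ¬ r y x) {i : ℕ} (hi : i + 1 < n) (J : Fin n → Fin N)
    (hr : r (J (fin1 i hi)) (J (fin2 i hi))) (F : Fin n × Fin n → K n) :
    ∏ q ∈ AscS r (J ∘ ⇑(Equiv.swap (fin1 i hi) (fin2 i hi))),
        F (Equiv.swap (fin1 i hi) (fin2 i hi) q.1,
           Equiv.swap (fin1 i hi) (fin2 i hi) q.2)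
      = ∏ q ∈ (AscS r J).erase (fin1 i hi, fin2 i hi), F q := by
  refine Finset.prod_equiv
    (Equiv.prodCongr (Equiv.swap (fin1 i hi) (fin2 i hi))
      (Equiv.swap (fin1 i hi) (fin2 i hi))) ?_ ?_
  · intro q
    exact AscS_swap_mem r hasymm hi J hr q
  · intro q _
    rfl

lemma no_adj_asc_empty (J : Fin n → Fin N)
    (h : ∀ (i : ℕ) (hi : i + 1 < n), ¬ J (fin1 i hi) < J (fin2 i hi)) :
    AscS (· < ·) J = ∅ := by
  have hanti : Antitone J := antitone_of_no_asc J (fun i hi => not_lt.mp (h i hi))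
  unfold AscS
  rw [Finset.filter_eq_empty_iff]
  rintro p _ ⟨h1, h2⟩
  exact absurd h2 (not_lt.mpr (hanti (le_of_lt h1)))

lemma no_adj_desc_empty (J : Fin n → Fin N)
    (h : ∀ (i : ℕ) (hi : i + 1 < n), ¬ J (fin2 i hi) < J (fin1 i hi)) :
    AscS (fun x y => y < x) J = ∅ := by
  have hmono : Monotone J := monotone_of_no_desc J (fun i hi => not_lt.mp (h i hi))
  unfold AscS
  rw [Finset.filter_eq_empty_iff]
  rintro p _ ⟨h1, h2⟩
  exact absurd h2 (not_lt.mpr (hmono (le_of_lt h1)))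

lemma exists_adj_asc (J : Fin n → Fin N) (h : AscS (· < ·) J ≠ ∅) :
    ∃ (i : ℕ) (hi : i + 1 < n), J (fin1 i hi) < J (fin2 i hi) := by
  by_contra hc
  push_neg at hc
  exact h (no_adj_asc_empty J (fun i hi => not_lt.mpr (hc i hi)))

lemma exists_adj_desc (J : Fin n → Fin N) (h : AscS (fun x y => y < x) J ≠ ∅) :
    ∃ (i : ℕ) (hi : i + 1 < n), J (fin2 i hi) < J (fin1 i hi) := by
  by_contra hc
  push_neg at hc
  exact h (no_adj_desc_empty J (fun i hi => not_lt.mpr (hc i hi)))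

lemma memI_comp_swap {lam : Fin N → ℕ} {m : Fin n → Fin N} (hm : memI lam m)
    (a b : Fin n) : memI lam (m ∘ ⇑(Equiv.swap a b)) := by
  intro c
  rw [← hm c]
  unfold fib
  refine Finset.card_bij' (fun t _ => Equiv.swap a b t) (fun t _ => Equiv.swap a b t)
    ?_ ?_ ?_ ?_
  · intro t ht
    simp only [Finset.mem_filter, Finset.mem_univ, true_and, Function.comp] at ht ⊢
    exact ht
  · intro t ht
    simp only [Finset.mem_filter, Finset.mem_univ, true_and, Function.comp] at ht ⊢
    simpa [Equiv.swap_apply_self] using ht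
  · intro t _; simp [Equiv.swap_apply_self]
  · intro t _; simp [Equiv.swap_apply_self]

lemma permK_swap_Rz (a b : Fin n) (m : Fin n → Fin N) :
    permK (Equiv.swap a b) (Rz m) = Rz (m ∘ ⇑(Equiv.swap a b)) := by
  unfold Rz
  rw [map_prod]
  refine Finset.prod_equiv (Equiv.prodCongr (Equiv.swap a b) (Equiv.swap a b)) ?_ ?_
  · intro p
    simp [Function.comp, Equiv.swap_apply_self, Equiv.prodCongr_apply, Prod.map]
  · intro p _
    simp only [Equiv.prodCongr_apply, Prod.map]
    rw [map_sub, permK_z, permK_z]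

lemma permK_swap_Qz (a b : Fin n) (m : Fin n → Fin N) :
    permK (Equiv.swap a b) (Qz m) = Qz (m ∘ ⇑(Equiv.swap a b)) := by
  unfold Qz
  rw [map_prod]
  refine Finset.prod_equiv (Equiv.prodCongr (Equiv.swap a b) (Equiv.swap a b)) ?_ ?_
  · intro p
    simp [Function.comp, Equiv.swap_apply_self, Equiv.prodCongr_apply, Prod.map]
  · intro p _
    simp only [Equiv.prodCongr_apply, Prod.map]
    rw [map_add, map_sub, permK_z, permK_z, permK_hvar]

end Asc
section Lead
variable {n N : ℕ}

/-- The leading coefficient of `ξ⁻_J`. -/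
def leadF (J : Fin n → Fin N) : K n :=
  ∏ q ∈ AscS (· < ·) J, ((z q.1 - z q.2) / (z q.1 - z q.2 + hvar))

lemma lt_asymm' : ∀ x y : Fin N, x < y → ¬ y < x := fun _ _ h h' => absurd h' (lt_asymm h)

lemma lead_rec {i : ℕ} (hi : i + 1 < n) (J : Fin n → Fin N)
    (hasc : J (fin1 i hi) < J (fin2 i hi)) :
    leadF J = (z (fin1 i hi) - z (fin2 i hi)) *
        permK (Equiv.swap (fin1 i hi) (fin2 i hi))
          (leadF (J ∘ ⇑(Equiv.swap (fin1 i hi) (fin2 i hi))))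
      / (z (fin1 i hi) - z (fin2 i hi) + hvar) := by
  have hperm : permK (Equiv.swap (fin1 i hi) (fin2 i hi))
      (leadF (J ∘ ⇑(Equiv.swap (fin1 i hi) (fin2 i hi))))
      = ∏ q ∈ (AscS (· < ·) J).erase (fin1 i hi, fin2 i hi),
          ((z q.1 - z q.2) / (z q.1 - z q.2 + hvar)) := by
    unfold leadF
    rw [map_prod]
    rw [← AscS_swap_prod (· < ·) lt_asymm' hi J hasc
      (fun q => (z q.1 - z q.2) / (z q.1 - z q.2 + hvar))]
    apply Finset.prod_congr rfl
    intro q _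
    rw [map_div₀, map_add, map_sub, permK_z, permK_z, permK_hvar]
  rw [hperm]
  unfold leadF
  rw [← Finset.mul_prod_erase _ _ (AscS_mem_adj (· < ·) hi J hasc)]
  rw [div_mul_eq_mul_div]

lemma lead_m0 {lam : Fin N → ℕ} {m0 : Fin n → Fin N}
    (hm0 : memI lam m0) (hmono : Monotone m0) : leadF m0 = Rz m0 / Qz m0 := by
  have hset : AscS (· < ·) m0
      = Finset.univ.filter (fun p : Fin n × Fin n => m0 p.1 < m0 p.2) := by
    ext p
    simp only [AscS, Finset.mem_filter, Finset.mem_univ, true_and]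
    constructor
    · rintro ⟨_, h2⟩; exact h2
    · intro h
      refine ⟨?_, h⟩
      rcases lt_or_ge p.1 p.2 with h1 | h1
      · exact h1
      · exact absurd h (not_lt.mpr (hmono h1))
  unfold leadF Rz Qz
  rw [hset, Finset.prod_div_distrib]

end Lead

section Tri
variable {n N : ℕ}

lemma tri (lam : Fin N → ℕ) (m1 : Fin n → Fin N) (hm1 : memI lam m1)
    (hm1anti : Antitone m1) (ξm : (Fin n → Fin N) → VV n N)
    (hbase : ξm m1 = bas m1)
    (hmrec : ∀ m, memI lam m → ∀ (i : ℕ) (hi : i + 1 < n),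
      ξm (m ∘ ⇑(Equiv.swap (fin1 i hi) (fin2 i hi))) = tOp false i hi (ξm m)) :
    ∀ (c : ℕ) (J : Fin n → Fin N), memI lam J → (AscS (· < ·) J).card = c →
      (∀ Kw, ξm J Kw ≠ 0 → ord J Kw) ∧ ξm J J = leadF J := by
  intro c
  induction c using Nat.strong_induction_on with
  | _ c ih =>
    intro J hJ hc
    rcases Nat.eq_zero_or_pos c with h0 | hpos
    · subst h0
      have hempty : AscS (· < ·) J = ∅ := Finset.card_eq_zero.mp hc
      have hanti : Antitone J := by
        apply antitone_of_no_asc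
        intro i hi
        by_contra hcon
        have hlt : J (fin1 i hi) < J (fin2 i hi) := not_le.mp hcon
        have := AscS_mem_adj (· < ·) hi J hlt
        rw [hempty] at this
        exact absurd this (Finset.notMem_empty _)
      have hJm1 : J = m1 := antitone_unique hJ hm1 hanti hm1anti
      constructor
      · intro Kw hKw
        rw [hJm1, hbase] at hKw
        by_cases hK : Kw = m1
        · rw [hJm1, hK]; exact ord_refl m1
        · exact absurd (by simp [bas, hK]) hKw
      · rw [hJm1, hbase]
        have hempty' : AscS (· < ·) m1 = ∅ := hJm1 ▸ hempty
        simp [bas, leadF, hempty']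
    · have hnempty : AscS (· < ·) J ≠ ∅ := by
        intro h; rw [h] at hc; simp at hc; omega
      obtain ⟨i, hi, hasc⟩ := exists_adj_asc J hnempty
      have hJ'' : memI lam (J ∘ ⇑(Equiv.swap (fin1 i hi) (fin2 i hi))) :=
        memI_comp_swap hJ _ _
      have hcard := AscS_swap_card (· < ·) lt_asymm' hi J hasc
      have hlt : (AscS (· < ·) (J ∘ ⇑(Equiv.swap (fin1 i hi) (fin2 i hi)))).card < c := by
        omega
      obtain ⟨ihsupp, ihlead⟩ := ih _ hlt _ hJ'' rfl
      have hrecJ : ξm J = tOp false i hi (ξm (J ∘ ⇑(Equiv.swap (fin1 i hi) (fin2 i hi)))) := by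
        have := hmrec _ hJ'' i hi
        rwa [comp_swap_swap] at this
      have hval : ∀ Kw, ξm J Kw
          = ((z (fin1 i hi) - z (fin2 i hi)) *
              permK (Equiv.swap (fin1 i hi) (fin2 i hi))
                (ξm (J ∘ ⇑(Equiv.swap (fin1 i hi) (fin2 i hi)))
                  (Kw ∘ ⇑(Equiv.swap (fin1 i hi) (fin2 i hi))))
            + hvar * permK (Equiv.swap (fin1 i hi) (fin2 i hi))
                (ξm (J ∘ ⇑(Equiv.swap (fin1 i hi) (fin2 i hi))) Kw))
            / (z (fin1 i hi) - z (fin2 i hi) + hvar) := by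
        intro Kw
        rw [hrecJ]
        simp only [tOp, sign', Bool.false_eq_true, if_false]
        congr 1 <;> ring
      constructor
      · intro Kw hKw
        rw [hval Kw] at hKw
        have hnum : ξm (J ∘ ⇑(Equiv.swap (fin1 i hi) (fin2 i hi)))
              (Kw ∘ ⇑(Equiv.swap (fin1 i hi) (fin2 i hi))) ≠ 0
            ∨ ξm (J ∘ ⇑(Equiv.swap (fin1 i hi) (fin2 i hi))) Kw ≠ 0 := by
          by_contra hcon
          push_neg at hcon
          obtain ⟨e1, e2⟩ := hcon
          apply hKw
          rw [e1, e2]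
          simp
        rcases hnum with h1 | h1
        · exact ord_exchange hi J Kw hasc (ihsupp _ h1)
        · exact ord_trans (ord_comp_swap_of_ascent hi J hasc) (ihsupp _ h1)
      · rw [hval J]
        have hzero : ξm (J ∘ ⇑(Equiv.swap (fin1 i hi) (fin2 i hi))) J = 0 := by
          by_contra hnz
          have hord := ihsupp J hnz
          have hdes : (J ∘ ⇑(Equiv.swap (fin1 i hi) (fin2 i hi))) (fin2 i hi)
              < (J ∘ ⇑(Equiv.swap (fin1 i hi) (fin2 i hi))) (fin1 i hi) := by
            rw [comp_swap_at_fin1 hi, comp_swap_at_fin2 hi]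
            exact hasc
          have hno := not_ord_comp_swap_of_descent hi _ hdes
          apply hno
          rwa [comp_swap_swap]
        rw [hzero, map_zero, mul_zero, add_zero, ihlead]
        exact (lead_rec hi J hasc).symm

end Tri
/-- for `I, J ∈ ℐ_λ`, the Shapovalov pairing (the bilinear form for which
the basis `{v_I}` is orthonormal) satisfies `𝒮(ξ_I^+, ξ_J^−) = δ_{I,J} R(z_I)/Q(z_I)`.
Here `ξ^+` and `ξ^−` are the (unique) families determined by `ξ^+_{I^min} = v_{I^min}`,
`ξ^+_{s_i(I)} = ŝ̃_i^+ ξ^+_I` and `ξ^−_{I^max} = v_{I^max}`, `ξ^−_{s_i(I)} = ŝ̃_i^− ξ^−_I`;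
`m0` encodes `I^min` (monotone) and `m1` encodes `I^max` (antitone). -/
theorem statement8 (n N : ℕ) (lam : Fin N → ℕ) (hlam : ∑ a : Fin N, lam a = n)
    (m0 : Fin n → Fin N) (hm0 : memI lam m0) (hm0mono : Monotone m0)
    (m1 : Fin n → Fin N) (hm1 : memI lam m1) (hm1anti : Antitone m1)
    (ξp ξm : (Fin n → Fin N) → VV n N)
    (hp0 : ξp m0 = bas m0)
    (hprec : ∀ m, memI lam m → ∀ (i : ℕ) (hi : i + 1 < n),
      ξp (m ∘ ⇑(Equiv.swap (fin1 i hi) (fin2 i hi))) = tOp true i hi (ξp m))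
    (hm0' : ξm m1 = bas m1)
    (hmrec : ∀ m, memI lam m → ∀ (i : ℕ) (hi : i + 1 < n),
      ξm (m ∘ ⇑(Equiv.swap (fin1 i hi) (fin2 i hi))) = tOp false i hi (ξm m)) :
    ∀ mI mJ : Fin n → Fin N, memI lam mI → memI lam mJ →
      (∑ k : Fin n → Fin N, ξp mI k * ξm mJ k) =
        if mI = mJ then Rz mI / Qz mI else 0 := by
  suffices main : ∀ (c : ℕ) (mI mJ : Fin n → Fin N), memI lam mI → memI lam mJ →
      (AscS (fun x y => y < x) mI).card = c →
      (∑ k : Fin n → Fin N, ξp mI k * ξm mJ k) = if mI = mJ then Rz mI / Qz mI else 0 by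
    intro mI mJ hI hJ
    exact main _ mI mJ hI hJ rfl
  intro c
  induction c using Nat.strong_induction_on with
  | _ c ih =>
    intro mI mJ hI hJ hc
    rcases Nat.eq_zero_or_pos c with h0 | hpos
    · subst h0
      have hempty : AscS (fun x y => y < x) mI = ∅ := Finset.card_eq_zero.mp hc
      have hmono : Monotone mI := by
        apply monotone_of_no_desc
        intro i hi
        by_contra hcon
        have hlt : mI (fin2 i hi) < mI (fin1 i hi) := not_le.mp hcon
        have := AscS_mem_adj (fun x y => y < x) hi mI hlt
        rw [hempty] at this
        exact absurd this (Finset.notMem_empty _)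
      have hIm0 : mI = m0 := monotone_unique hI hm0 hmono hm0mono
      have hsum : (∑ k : Fin n → Fin N, ξp mI k * ξm mJ k) = ξm mJ m0 := by
        rw [hIm0, hp0]
        rw [Finset.sum_eq_single m0]
        · simp [bas]
        · intro k _ hk; simp [bas, hk]
        · intro h; exact absurd (Finset.mem_univ m0) h
      obtain ⟨hsupp, hlead⟩ := tri lam m1 hm1 hm1anti ξm hm0' hmrec _ mJ hJ rfl
      by_cases hJm0 : mJ = m0
      · subst hJm0
        rw [if_pos hIm0, hsum, hlead, lead_m0 hm0 hm0mono, hIm0]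
      · have hzero : ξm mJ m0 = 0 := by
          by_contra hnz
          exact hJm0 (ord_min hm0 hm0mono hJ (hsupp m0 hnz))
        have hne : mI ≠ mJ := fun h => hJm0 (h ▸ hIm0)
        rw [if_neg hne, hsum, hzero]
    · have hnempty : AscS (fun x y => y < x) mI ≠ ∅ := by
        intro h; rw [h] at hc; simp at hc; omega
      obtain ⟨i, hi, hdes⟩ := exists_adj_desc mI hnempty
      have hI' : memI lam (mI ∘ ⇑(Equiv.swap (fin1 i hi) (fin2 i hi))) :=
        memI_comp_swap hI _ _
      have hJ' : memI lam (mJ ∘ ⇑(Equiv.swap (fin1 i hi) (fin2 i hi))) :=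
        memI_comp_swap hJ _ _
      have hcard := AscS_swap_card (fun x y => y < x)
        (fun x y h h' => absurd h' (lt_asymm h)) hi mI hdes
      have hlt : (AscS (fun x y => y < x)
          (mI ∘ ⇑(Equiv.swap (fin1 i hi) (fin2 i hi)))).card < c := by omega
      have hrecI : ξp mI = tOp true i hi (ξp (mI ∘ ⇑(Equiv.swap (fin1 i hi) (fin2 i hi)))) := by
        have := hprec _ hI' i hi
        rwa [comp_swap_swap] at this
      have hrecJ : ξm mJ = tOp false i hi (ξm (mJ ∘ ⇑(Equiv.swap (fin1 i hi) (fin2 i hi)))) := by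
        have := hmrec _ hJ' i hi
        rwa [comp_swap_swap] at this
      rw [hrecI, hrecJ, pair_tOp i hi]
      rw [ih _ hlt _ _ hI' hJ' rfl]
      by_cases heq : mI ∘ ⇑(Equiv.swap (fin1 i hi) (fin2 i hi))
          = mJ ∘ ⇑(Equiv.swap (fin1 i hi) (fin2 i hi))
      · have heq' : mI = mJ := by
          have := congrArg (fun m => m ∘ ⇑(Equiv.swap (fin1 i hi) (fin2 i hi))) heq
          simp only [comp_swap_swap] at this
          exact this
        rw [if_pos heq, if_pos heq']
        rw [map_div₀, permK_swap_Rz, permK_swap_Qz, comp_swap_swap]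
      · have hne2 : mI ≠ mJ := fun h => heq (by rw [h])
        rw [if_neg heq, if_neg hne2, map_zero]

end GRTV
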